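/- For every polynomial f with rational coefficients, f(A(G)) j = 0 if and only if the main characteristic polynomial m_G divides f in ℚ[x]. -/

import Mathlib

open Matrix Polynomial

/-- `μ` is a main eigenvalue of the matrix `A`. -/
def Matrix.IsMainEig {n : ℕ} (A : Matrix (Fin n) (Fin n) ℝ) (μ : ℝ) : Prop :=
  ∃ v : Fin n → ℝ, A *ᵥ v = μ • v ∧ v ⬝ᵥ (fun _ => (1 : ℝ)) ≠ 0

private lemma aeval_mulVec_eig {n : ℕ} (A : Matrix (Fin n) (Fin n) ℝ) (p : Polynomial ℝ)
    {v : Fin n → ℝ} {μ : ℝ} (h : A *ᵥ v = μ • v) :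
    (aeval A p) *ᵥ v = p.eval μ • v := by
  have hpow : ∀ k : ℕ, (A ^ k) *ᵥ v = (μ ^ k) • v := by
    intro k
    induction k with
    | zero => simp
    | succ k ih =>
      rw [pow_succ, pow_succ, ← Matrix.mulVec_mulVec, h, Matrix.mulVec_smul, ih,
        smul_smul, mul_comm]
  induction p using Polynomial.induction_on' with
  | add p q hp hq => simp [Matrix.add_mulVec, hp, hq, add_smul]
  | monomial k a =>
    rw [aeval_monomial, eval_monomial, ← Matrix.mulVec_mulVec, hpow, Matrix.mulVec_smul]
    simp [Matrix.smul_mulVec, smul_smul, Algebra.algebraMap_eq_smul_one,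
      Matrix.smul_mulVec, Matrix.one_mulVec, mul_comm]

private lemma dotProduct_eq_inner {n : ℕ} (x y : Fin n → ℝ) :
    x ⬝ᵥ y = inner (𝕜 := ℝ) ((WithLp.equiv 2 (Fin n → ℝ)).symm x)
      ((WithLp.equiv 2 (Fin n → ℝ)).symm y) := by
  simp [dotProduct, PiLp.inner_apply, RCLike.inner_apply, conj_trivial, mul_comm]

private lemma onb_dec {n : ℕ} (e : OrthonormalBasis (Fin n) ℝ (EuclideanSpace ℝ (Fin n)))
    (v : Fin n → ℝ) :
    v = ∑ i, (⇑(e i) ⬝ᵥ v) • ⇑(e i) := by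
  have h := e.sum_repr' ((WithLp.equiv 2 (Fin n → ℝ)).symm v)
  have h2 : ∀ i, ⇑(e i) ⬝ᵥ v = inner (𝕜 := ℝ) (e i) ((WithLp.equiv 2 (Fin n → ℝ)).symm v) := by
    intro i
    rw [dotProduct_eq_inner]
    try simp
  simp_rw [h2]
  have h3 := congrArg WithLp.ofLp h.symm
  simp only [WithLp.ofLp_sum, WithLp.ofLp_smul] at h3
  exact h3

/-- key spectral fact -/
private lemma key {n : ℕ} (A : Matrix (Fin n) (Fin n) ℝ) (hSym : A.IsHermitian)
    (p : Polynomial ℝ) :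
    (aeval A p) *ᵥ (fun _ => (1 : ℝ)) = 0 ↔ ∀ μ, A.IsMainEig μ → p.eval μ = 0 := by
  classical
  set e := hSym.eigenvectorBasis with he
  set lam := hSym.eigenvalues with hlam
  have hmv : ∀ i, A *ᵥ ⇑(e i) = lam i • ⇑(e i) := hSym.mulVec_eigenvectorBasis
  set c : Fin n → ℝ := fun i => ⇑(e i) ⬝ᵥ (fun _ => (1 : ℝ)) with hc
  have hj : (fun _ => (1 : ℝ) : Fin n → ℝ) = ∑ i, c i • ⇑(e i) := onb_dec e _
  -- expansion of the vector
  have expand : (aeval A p) *ᵥ (fun _ => (1 : ℝ)) = ∑ i, (c i * p.eval (lam i)) • ⇑(e i) := by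
    conv_lhs => rw [hj]
    rw [← Matrix.mulVecLin_apply, map_sum]
    congr 1
    funext i
    rw [LinearMap.map_smul, Matrix.mulVecLin_apply, aeval_mulVec_eig A p (hmv i), smul_smul]
  -- linear independence
  have hli : ∀ g : Fin n → ℝ, ∑ i, g i • ⇑(e i) = (0 : Fin n → ℝ) → ∀ i, g i = 0 := by
    intro g hg i
    have hli' := e.toBasis.linearIndependent
    rw [Fintype.linearIndependent_iff] at hli'
    refine hli' g ?_ i
    have h3 : (∑ i, g i • ⇑(e i) : Fin n → ℝ) =
        ((∑ i, g i • e.toBasis i : EuclideanSpace ℝ (Fin n)) : Fin n → ℝ) := by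
      simp only [OrthonormalBasis.coe_toBasis]
      simp only [WithLp.ofLp_sum, WithLp.ofLp_smul]
    rw [h3] at hg
    exact WithLp.ofLp_injective 2 (by rw [hg, WithLp.ofLp_zero])
  constructor
  · intro h0 μ hμ
    obtain ⟨v, hv, hvj⟩ := hμ
    have hcoef : ∀ i, c i * p.eval (lam i) = 0 := by
      intro i
      exact hli _ (by rw [← expand]; exact h0) i
    set d : Fin n → ℝ := fun i => ⇑(e i) ⬝ᵥ v with hd
    have hvdec : v = ∑ i, d i • ⇑(e i) := onb_dec e v
    have hdot : v ⬝ᵥ (fun _ => (1 : ℝ)) = ∑ i, d i * c i := by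
      rw [dotProduct_eq_inner,
        ← e.sum_repr' ((WithLp.equiv 2 (Fin n → ℝ)).symm v), sum_inner]
      congr 1; funext i
      rw [real_inner_smul_left]
      congr 1
      · exact (dotProduct_eq_inner _ _).symm
      · exact (dotProduct_eq_inner _ _).symm
    obtain ⟨i, hi⟩ : ∃ i, d i * c i ≠ 0 := by
      by_contra hcon
      push_neg at hcon
      rw [hdot] at hvj
      exact hvj (Finset.sum_eq_zero fun i _ => hcon i)
    have hdi : d i ≠ 0 := fun h => hi (by rw [h, zero_mul])
    have hci : c i ≠ 0 := fun h => hi (by rw [h, mul_zero])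
    have hlm : lam i = μ := by
      have h1 : ⇑(e i) ⬝ᵥ (A *ᵥ v) = μ * d i := by
        rw [hv, dotProduct_smul]; simp [hd, smul_eq_mul]
      have h2 : ⇑(e i) ⬝ᵥ (A *ᵥ v) = lam i * d i := by
        rw [Matrix.dotProduct_mulVec, ← Matrix.mulVec_transpose]
        have hAT : Aᵀ = A := by
          have h4 := hSym; rw [Matrix.IsHermitian] at h4
          simpa using h4
        rw [hAT, hmv i, smul_dotProduct]
        simp [hd, smul_eq_mul]
      exact (mul_right_cancel₀ hdi (h1.symm.trans h2)).symm
    rcases mul_eq_zero.mp (hcoef i) with h | h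
    · exact absurd h hci
    · rwa [hlm] at h
  · intro h
    rw [expand]
    apply Finset.sum_eq_zero
    intro i _
    rcases eq_or_ne (c i) 0 with hci | hci
    · rw [hci, zero_mul, zero_smul]
    · have hmain : A.IsMainEig (lam i) := ⟨⇑(e i), hmv i, hci⟩
      rw [h _ hmain, mul_zero, zero_smul]

/-- For every polynomial `f ∈ ℚ[x]`, `f(A(G)) j = 0` iff the main characteristic
polynomial `m_G` (which has rational coefficients) divides `f` in `ℚ[x]`. -/
theorem aeval_ones_eq_zero_iff_mainCharPoly_dvd {n : ℕ} (G : SimpleGraph (Fin n))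
    [DecidableRel G.Adj] (A : Matrix (Fin n) (Fin n) ℝ) (hA : A = G.adjMatrix ℝ)
    (S : Finset ℝ) (hS : ∀ μ, μ ∈ S ↔ A.IsMainEig μ)
    (mG : Polynomial ℚ) (hm : mG.map (algebraMap ℚ ℝ) = ∏ μ ∈ S, (X - C μ))
    (f : Polynomial ℚ) :
    (aeval A (f.map (algebraMap ℚ ℝ))) *ᵥ (fun _ => (1 : ℝ)) = 0 ↔ mG ∣ f := by
  have hSym : A.IsHermitian := by
    rw [hA]
    unfold Matrix.IsHermitian
    ext i j
    simp [Matrix.conjTranspose_apply, SimpleGraph.adjMatrix_apply, SimpleGraph.adj_comm]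
  rw [key A hSym]
  have hmonic : mG.Monic := by
    apply Polynomial.monic_of_injective (algebraMap ℚ ℝ).injective
    rw [hm]
    exact monic_prod_of_monic _ _ fun μ _ => monic_X_sub_C μ
  rw [← Polynomial.map_dvd_map (algebraMap ℚ ℝ) (algebraMap ℚ ℝ).injective hmonic, hm]
  constructor
  · intro h
    apply Finset.prod_dvd_of_coprime
    · exact (Polynomial.pairwise_coprime_X_sub_C Function.injective_id).set_pairwise _
    · intro μ hμ
      rw [Polynomial.dvd_iff_isRoot]
      exact h μ ((hS μ).mp hμ)
  · intro h μ hμ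
    have hμS : μ ∈ S := (hS μ).mpr hμ
    exact Polynomial.dvd_iff_isRoot.mp (dvd_trans (Finset.dvd_prod_of_mem (fun μ => X - C μ) hμS) h)
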